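/- Let $a, b$ be complex numbers in the closed upper half unit disk. Then $|1 - ba| \ge \frac{1}{\sqrt{2}} \min\{|1-b|, |1+b|\}$. -/

import Mathlib

open Complex

lemma key1 (x y u v : ℝ) (hy : 0 ≤ y) (hv : 0 ≤ v) (hu : 0 ≤ u)
    (ha : x^2+y^2 ≤ 1) (hb : u^2+v^2 ≤ 1) :
    (1-u)^2 + v^2 ≤ 2*((1-(u*x - v*y))^2 + (u*y + v*x)^2) := by
  rcases le_total x 0 with hx | hx
  · nlinarith [mul_nonneg hu (neg_nonneg.2 hx), mul_nonneg hv hy, sq_nonneg (u*y+v*x), sq_nonneg (u*x-v*y)]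
  · have hx1 : x ≤ 1 := by nlinarith [sq_nonneg y]
    rcases le_total u (u^2+v^2) with hc | hc
    · rcases (by positivity : (0:ℝ) ≤ u^2+v^2).eq_or_lt with h0 | h0
      · have hu0 : u = 0 := by nlinarith [sq_nonneg u, sq_nonneg v]
        have hv0 : v = 0 := by nlinarith [sq_nonneg u, sq_nonneg v]
        subst hu0 hv0; norm_num
      · nlinarith [h0, sq_nonneg (u - x*(u^2+v^2)),
          mul_nonneg (add_nonneg (sq_nonneg u) (sq_nonneg v)) (sub_nonneg.2 hb),
          mul_nonneg hu (sub_nonneg.2 hc),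
          mul_nonneg (mul_nonneg hv hy) (add_nonneg (sq_nonneg u) (sq_nonneg v)),
          sq_nonneg (y*(u^2+v^2))]
    · have h2 : 0 ≤ 4*u - 2*(u^2+v^2)*(1+x) := by nlinarith
      nlinarith [mul_nonneg (sub_nonneg.2 hx1) h2, sq_nonneg (1-u),
        mul_nonneg hv hy, mul_nonneg (sq_nonneg y) (add_nonneg (sq_nonneg u) (sq_nonneg v))]

theorem stmt_4 (a b : ℂ) (ha : ‖a‖ ≤ 1) (ha' : 0 ≤ a.im)
    (hb : ‖b‖ ≤ 1) (hb' : 0 ≤ b.im) :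
    (1 / Real.sqrt 2) * min (‖1 - b‖) (‖1 + b‖)
      ≤ ‖1 - b * a‖ := by
  have hs2 : (0:ℝ) < Real.sqrt 2 := by positivity
  have hm : 0 ≤ min (‖1 - b‖) (‖1 + b‖) :=
    le_min (norm_nonneg _) (norm_nonneg _)
  have hA : 0 ≤ ‖1 - b * a‖ := norm_nonneg _
  rw [div_mul_eq_mul_div, one_mul, div_le_iff₀ hs2]
  have ha2 : a.re^2 + a.im^2 ≤ 1 := by
    have h := Complex.sq_norm a
    rw [Complex.normSq_apply] at h
    nlinarith [norm_nonneg a]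
  have hb2 : b.re^2 + b.im^2 ≤ 1 := by
    have h := Complex.sq_norm b
    rw [Complex.normSq_apply] at h
    nlinarith [norm_nonneg b]
  have hAsq : (‖1 - b * a‖)^2
      = (1 - (b.re * a.re - b.im * a.im))^2 + (b.re * a.im + b.im * a.re)^2 := by
    rw [Complex.sq_norm, Complex.normSq_apply]
    simp [Complex.mul_re, Complex.mul_im]
    ring
  have key : (min (‖1 - b‖) (‖1 + b‖))^2
      ≤ (‖1 - b * a‖ * Real.sqrt 2)^2 := by
    rw [mul_pow, Real.sq_sqrt (by norm_num : (0:ℝ) ≤ 2)]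
    rcases le_total 0 b.re with hc | hc
    · calc (min (‖1 - b‖) (‖1 + b‖))^2
          ≤ (‖1 - b‖)^2 := by
            apply pow_le_pow_left₀ hm (min_le_left _ _)
        _ ≤ (‖1 - b * a‖)^2 * 2 := by
            rw [hAsq, Complex.sq_norm, Complex.normSq_apply]
            simp only [Complex.sub_re, Complex.sub_im, Complex.one_re, Complex.one_im]
            have := key1 a.re a.im b.re b.im ha' hb' hc ha2 hb2
            nlinarith [this]
    · calc (min (‖1 - b‖) (‖1 + b‖))^2
          ≤ (‖1 + b‖)^2 := by
            apply pow_le_pow_left₀ hm (min_le_right _ _)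
        _ ≤ (‖1 - b * a‖)^2 * 2 := by
            rw [hAsq, Complex.sq_norm, Complex.normSq_apply]
            simp only [Complex.add_re, Complex.add_im, Complex.one_re, Complex.one_im]
            have := key1 (-a.re) a.im (-b.re) b.im ha' hb' (neg_nonneg.2 hc)
              (by nlinarith) (by nlinarith)
            nlinarith [this]
  calc min (‖1 - b‖) (‖1 + b‖)
      = Real.sqrt ((min (‖1 - b‖) (‖1 + b‖))^2) :=
        (Real.sqrt_sq hm).symm
    _ ≤ Real.sqrt ((‖1 - b * a‖ * Real.sqrt 2)^2) := Real.sqrt_le_sqrt key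
    _ = ‖1 - b * a‖ * Real.sqrt 2 :=
        Real.sqrt_sq (by positivity)
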